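/- Let G = (V, E) be a finite simple graph with maximum degree bounded by d and treewidth bounded by h, and let ε ∈ (0,1/2). Suppose δ ∈ (0,1/2) and a positive integer k satisfy δ ≤ ε/(100·(2h+3)!·(1 + log k + log((2h+3)!))) and k ≥ 28860·d⁵·(h+1)⁵/(δε²). Then there exists a function f : V → 2^V such that: (1) for all v ∈ V, v ∈ f(v); (2) for all v ∈ V and all w ∈ f(v), f(v) = f(w); (3) for all v ∈ V, |f(v)| ≤ k; and (4) the number of edges (v,w) ∈ E with f(v) ≠ f(w) is at most ε|V|. -/

import Mathlib

open SimpleGraph Finset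


/-- `(bags, T)` is a tree decomposition of `G`: `T` is a forest on the index set of the
family of bags; every vertex appears in some bag; every edge is contained in some bag;
and for every vertex the set of bags containing it induces a connected subgraph of `T`. -/
def IsTreeDecomposition {V : Type} {m : ℕ} (G : SimpleGraph V)
    (bags : Fin m → Finset V) (T : SimpleGraph (Fin m)) : Prop :=
  T.IsAcyclic ∧
  (∀ v : V, ∃ i, v ∈ bags i) ∧
  (∀ u v : V, G.Adj u v → ∃ i, u ∈ bags i ∧ v ∈ bags i) ∧
  (∀ v : V, (T.induce {i : Fin m | v ∈ bags i}).Connected)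

/-- `G` has treewidth at most `h`: some tree decomposition has all bags of size ≤ `h + 1`. -/
def HasTreewidthLE {V : Type} (G : SimpleGraph V) (h : ℕ) : Prop :=
  ∃ (m : ℕ) (bags : Fin m → Finset V) (T : SimpleGraph (Fin m)),
    IsTreeDecomposition G bags T ∧ ∀ i, (bags i).card ≤ h + 1

namespace AuxPart

attribute [local instance] Classical.propDecidable

/-- Crossing lemma: along a walk from a `P`-vertex to a non-`P`-vertex there is a crossing edge. -/
lemma walk_cross {W : Type*} {H : SimpleGraph W} (P : W → Prop) :
    ∀ {x y : W}, H.Walk x y → P x → ¬ P y → ∃ p q, H.Adj p q ∧ P p ∧ ¬ P q := by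
  intro x y w
  induction w with
  | nil => intro h1 h2; exact absurd h1 h2
  | @cons a b c h w ih =>
    intro h1 h2
    by_cases hz : P b
    · exact ih hz h2
    · exact ⟨a, b, h, h1, hz⟩

lemma not_reach_del {m : ℕ} {T : SimpleGraph (Fin m)} (hT : T.IsAcyclic)
    {b c : Fin m} (hbc : T.Adj b c) :
    ¬ (T.deleteEdges {s(b, c)}).Reachable c b := by
  intro hr
  obtain ⟨w0⟩ := hr
  set p : (T.deleteEdges {s(b, c)}).Path c b := w0.toPath with hp
  have hedges : ∀ e ∈ (p : (T.deleteEdges {s(b, c)}).Walk c b).edges, e ∈ T.edgeSet := by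
    intro e he
    have := (p : (T.deleteEdges {s(b, c)}).Walk c b).edges_subset_edgeSet he
    rw [edgeSet_deleteEdges] at this
    exact this.1
  have havoid : s(b, c) ∉ (p : (T.deleteEdges {s(b, c)}).Walk c b).edges := by
    intro he
    have := (p : (T.deleteEdges {s(b, c)}).Walk c b).edges_subset_edgeSet he
    rw [edgeSet_deleteEdges] at this
    exact this.2 rfl
  set q : T.Walk c b := (p : (T.deleteEdges {s(b, c)}).Walk c b).transfer T hedges with hq
  have hqpath : q.IsPath := p.2.transfer hedges
  have heq : (⟨q, hqpath⟩ : T.Path c b) = Path.singleton hbc.symm := hT.path_unique _ _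
  have : s(c, b) ∈ q.edges := by
    have := congrArg (fun r : T.Path c b => (r : T.Walk c b).edges) heq
    simp only [Path.singleton] at this
    rw [this]
    simp [Walk.edges]
  rw [Sym2.eq_swap, hq, Walk.edges_transfer] at this
  exact havoid this

/-- (ii): the side of `c` across edge `(b,c)` is inside the side of `b` across `(a,b)`. -/
lemma side_mono {m : ℕ} {T : SimpleGraph (Fin m)} (hT : T.IsAcyclic)
    {a b c x : Fin m} (hab : T.Adj a b) (hbc : T.Adj b c) (hca : c ≠ a)
    (hx : (T.deleteEdges {s(b, c)}).Reachable c x) :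
    (T.deleteEdges {s(a, b)}).Reachable b x := by
  obtain ⟨w0⟩ := hx
  set p : (T.deleteEdges {s(b, c)}).Path c x := w0.toPath with hp
  have hedges : ∀ e ∈ (p : (T.deleteEdges {s(b, c)}).Walk c x).edges, e ∈ T.edgeSet := by
    intro e he
    have := (p : (T.deleteEdges {s(b, c)}).Walk c x).edges_subset_edgeSet he
    rw [edgeSet_deleteEdges] at this
    exact this.1
  have havoid : s(b, c) ∉ (p : (T.deleteEdges {s(b, c)}).Walk c x).edges := by
    intro he
    have := (p : (T.deleteEdges {s(b, c)}).Walk c x).edges_subset_edgeSet he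
    rw [edgeSet_deleteEdges] at this
    exact this.2 rfl
  set q : T.Walk c x := (p : (T.deleteEdges {s(b, c)}).Walk c x).transfer T hedges with hq
  have hqpath : q.IsPath := p.2.transfer hedges
  have hqe : q.edges = (p : (T.deleteEdges {s(b, c)}).Walk c x).edges :=
    Walk.edges_transfer _ hedges
  -- q avoids s(a,b)
  have hab' : s(a, b) ∉ q.edges := by
    intro he
    have hbsupp : b ∈ q.support := Walk.snd_mem_support_of_mem_edges q he
    -- take the initial segment of q up to b : a path from c to b avoiding s(b,c)
    set r : T.Walk c b := q.takeUntil b hbsupp with hr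
    have hrpath : r.IsPath := hqpath.takeUntil hbsupp
    have hre : s(b, c) ∉ r.edges := by
      intro h'
      exact havoid (hqe ▸ (Walk.edges_takeUntil_subset q hbsupp h'))
    have heq2 : (⟨r, hrpath⟩ : T.Path c b) = Path.singleton hbc.symm := hT.path_unique _ _
    have : s(c, b) ∈ r.edges := by
      have := congrArg (fun z : T.Path c b => (z : T.Walk c b).edges) heq2
      simp only [Path.singleton] at this
      rw [this]
      simp [Walk.edges]
    rw [Sym2.eq_swap] at this
    exact hre this
  -- now build walk b -> x in T \ s(a,b)
  have hsbc : s(b, c) ∉ ({s(a, b)} : Set (Sym2 (Fin m))) := by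
    simp only [Set.mem_singleton_iff, Sym2.eq_iff]
    rintro (⟨h1, h2⟩ | ⟨h1, h2⟩)
    · exact hab.ne (h1.symm)
    · exact hca h2
  have hq2 : ∀ e ∈ (Walk.cons hbc q).edges, e ∉ ({s(a, b)} : Set (Sym2 (Fin m))) := by
    intro e he
    rw [Walk.edges_cons] at he
    rcases List.mem_cons.mp he with h | h
    · subst h; exact hsbc
    · simp only [Set.mem_singleton_iff]
      intro h'
      exact hab' (h' ▸ h)
  exact ⟨(Walk.cons hbc q).toDeleteEdges _ hq2⟩

/-- Decomposition: anything reachable from `b` (other than `b`) lies on the far side of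
some edge at `b`. -/
lemma reach_decomp {W : Type*} {H : SimpleGraph W} {b x : W}
    (h : H.Reachable b x) (hne : x ≠ b) :
    ∃ c, H.Adj b c ∧ (H.deleteEdges {s(b, c)}).Reachable c x := by
  obtain ⟨w0⟩ := h
  obtain ⟨w, hw⟩ := w0.toPath
  cases w with
  | nil => exact absurd rfl hne
  | @cons _ c _ hadj rest =>
    refine ⟨c, hadj, ?_⟩
    have hbns : b ∉ rest.support := ((Walk.cons_isPath_iff _ _).mp hw).2
    have hre : ∀ e ∈ rest.edges, e ∉ ({s(b, c)} : Set (Sym2 W)) := by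
      intro e he
      simp only [Set.mem_singleton_iff]
      intro h'
      subst h'
      exact hbns (Walk.fst_mem_support_of_mem_edges rest he)
    exact ⟨rest.toDeleteEdges _ hre⟩

/-- L1: a vertex lying in bags on both sides of a tree edge lies in both endpoint bags. -/
lemma cross_bags {V : Type} {m : ℕ} {G : SimpleGraph V} {bags : Fin m → Finset V}
    {T : SimpleGraph (Fin m)} (hT : IsTreeDecomposition G bags T)
    {a b : Fin m} (hab : T.Adj a b) {v : V} {i j : Fin m}
    (hi : v ∈ bags i) (hj : v ∈ bags j)
    (hiS : (T.deleteEdges {s(a, b)}).Reachable b i)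
    (hjS : ¬ (T.deleteEdges {s(a, b)}).Reachable b j) :
    v ∈ bags a ∧ v ∈ bags b := by
  have hconn := (hT.2.2.2 v).preconnected ⟨i, hi⟩ ⟨j, hj⟩
  obtain ⟨w⟩ := hconn
  obtain ⟨p, q, hpq, hP, hnP⟩ := walk_cross
    (fun z : {i : Fin m | v ∈ bags i} => (T.deleteEdges {s(a, b)}).Reachable b ↑z) w hiS hjS
  have hadj : T.Adj ↑p ↑q := hpq
  have hpb : v ∈ bags ↑p := p.2
  have hqb : v ∈ bags ↑q := q.2
  have hedge : s((p : Fin m), (q : Fin m)) = s(a, b) := by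
    by_contra hne
    have : (T.deleteEdges {s(a, b)}).Adj ↑p ↑q := by
      rw [deleteEdges_adj]
      exact ⟨hadj, by simpa using hne⟩
    exact hnP (hP.trans this.reachable)
  rcases Sym2.eq_iff.mp hedge with ⟨h1, h2⟩ | ⟨h1, h2⟩
  · exact absurd (Reachable.refl b) (h2 ▸ hnP)
  · exact ⟨h2 ▸ hqb, h1 ▸ hpb⟩

/-- Two bags containing a common vertex are connected in `T`. -/
lemma reach_of_common {V : Type} {m : ℕ} {G : SimpleGraph V} {bags : Fin m → Finset V}
    {T : SimpleGraph (Fin m)} (hT : IsTreeDecomposition G bags T)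
    {v : V} {i j : Fin m} (hi : v ∈ bags i) (hj : v ∈ bags j) :
    T.Reachable i j := by
  by_contra hnr
  have hconn := (hT.2.2.2 v).preconnected ⟨i, hi⟩ ⟨j, hj⟩
  obtain ⟨w⟩ := hconn
  obtain ⟨p, q, hpq, hP, hnP⟩ := walk_cross
    (fun z : {i : Fin m | v ∈ bags i} => T.Reachable i ↑z) w (Reachable.refl i) hnr
  have hadj : T.Adj ↑p ↑q := hpq
  exact hnP (hP.trans hadj.reachable)

/-- The set of tree nodes on the `b`-side of the edge `(a,b)`. -/
def sideSet {m : ℕ} (T : SimpleGraph (Fin m)) (a b : Fin m) : Set (Fin m) :=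
  {x | (T.deleteEdges {s(a, b)}).Reachable b x}

/-- Union of a list of sets together with an accumulator. -/
def uni {X : Type*} (L : List (Set X)) (acc : Set X) : Set X :=
  acc ∪ {x | ∃ A ∈ L, x ∈ A}

lemma uni_nil {X : Type*} (acc : Set X) : uni ([] : List (Set X)) acc = acc := by
  simp [uni]

lemma uni_cons {X : Type*} (A : Set X) (L : List (Set X)) (acc : Set X) :
    uni (A :: L) acc = uni L (acc ∪ A) := by
  ext x; simp only [uni, Set.mem_union, Set.mem_setOf_eq, List.mem_cons]
  constructor
  · rintro (h | ⟨B, hB | hB, hx⟩)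
    · exact Or.inl (Or.inl h)
    · exact Or.inl (Or.inr (hB ▸ hx))
    · exact Or.inr ⟨B, hB, hx⟩
  · rintro ((h | h) | ⟨B, hB, hx⟩)
    · exact Or.inl h
    · exact Or.inr ⟨A, Or.inl rfl, h⟩
    · exact Or.inr ⟨B, Or.inr hB, hx⟩

lemma mem_uni_nilacc {X : Type*} {L : List (Set X)} {x : X} :
    x ∈ uni L (∅ : Set X) ↔ ∃ A ∈ L, x ∈ A := by
  simp [uni]

/-- Greedy grouping lemma. -/
lemma greedy {X : Type*} (wg : Set X → ℕ)
    (hmono : ∀ A B : Set X, A ⊆ B → wg A ≤ wg B)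
    (hsub : ∀ A B : Set X, wg (A ∪ B) ≤ wg A + wg B) (t τ : ℕ) :
    ∀ (L : List (Set X)) (acc : Set X), (∀ A ∈ L, wg A ≤ t) → wg acc ≤ τ →
      τ < wg (uni L acc) →
      ∃ L' : List (Set X), (∀ A ∈ L', A ∈ L) ∧ τ < wg (uni L' acc) ∧
        wg (uni L' acc) ≤ τ + t := by
  intro L
  induction L with
  | nil =>
    intro acc _ hacc htot
    rw [uni_nil] at htot
    omega
  | cons A L ih =>
    intro acc hL hacc htot
    by_cases hc : τ < wg (acc ∪ A)
    · refine ⟨[A], by simp, ?_, ?_⟩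
      · have : uni [A] acc = acc ∪ A := by
          rw [uni_cons, uni_nil]
        rw [this]; exact hc
      · have : uni [A] acc = acc ∪ A := by
          rw [uni_cons, uni_nil]
        rw [this]
        calc wg (acc ∪ A) ≤ wg acc + wg A := hsub _ _
          _ ≤ τ + t := Nat.add_le_add hacc (hL A (by simp))
    · push_neg at hc
      rw [uni_cons] at htot
      obtain ⟨L', hL'1, hL'2, hL'3⟩ := ih (acc ∪ A)
        (fun B hB => hL B (List.mem_cons_of_mem _ hB)) hc htot
      have heq : uni L' (acc ∪ A) = uni (A :: L') acc := (uni_cons A L' acc).symm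
      rw [heq] at hL'2 hL'3
      exact ⟨A :: L', by
        intro B hB
        rcases List.mem_cons.mp hB with h | h
        · exact h ▸ (List.mem_cons_self : A ∈ A :: L)
        · exact List.mem_cons_of_mem _ (hL'1 B h), hL'2, hL'3⟩

section Extract

variable {V : Type} [Fintype V] {G : SimpleGraph V} {m : ℕ} {bags : Fin m → Finset V}
  {T : SimpleGraph (Fin m)} {h d k : ℕ} {ρ : V → Fin m}

/-- Bound the number of cut edges by the size of a single bag times max degree. -/
lemma cut_bound (hT : IsTreeDecomposition G bags T)
    (hbags : ∀ i, (bags i).card ≤ h + 1) (hdeg : ∀ v, G.degree v ≤ d)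
    (hρ : ∀ v, v ∈ bags (ρ v)) (R : Finset V) (S : Set (Fin m)) (b : Fin m)
    (CP : ∀ i ∈ S, ∀ j, j ∉ S → ∀ v : V, v ∈ bags i → v ∈ bags j → v ∈ bags b) :
    (G.edgeFinset.filter (fun e => ∃ u v : V, e = s(u, v) ∧ u ∈ R ∧ v ∈ R ∧
      ρ u ∈ S ∧ ρ v ∉ S)).card ≤ (h + 1) * d := by
  classical
  have hsub : (G.edgeFinset.filter (fun e => ∃ u v : V, e = s(u, v) ∧ u ∈ R ∧ v ∈ R ∧
      ρ u ∈ S ∧ ρ v ∉ S)) ⊆ (bags b).biUnion (fun x => G.incidenceFinset x) := by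
    intro e he
    rw [Finset.mem_filter] at he
    obtain ⟨heE, u, v, rfl, hu, hv, huS, hvS⟩ := he
    have hadj : G.Adj u v := SimpleGraph.mem_edgeFinset.mp heE
    obtain ⟨j₀, hj₀u, hj₀v⟩ := hT.2.2.1 u v hadj
    by_cases hj : j₀ ∈ S
    · -- v's own bag is outside S, j₀ is inside: v ∈ bags b
      have hvb : v ∈ bags b := CP j₀ hj (ρ v) hvS v hj₀v (hρ v)
      exact Finset.mem_biUnion.mpr ⟨v, hvb, by
        rw [SimpleGraph.mem_incidenceFinset]
        exact ⟨SimpleGraph.mem_edgeFinset.mp heE, Sym2.mem_mk_right u v⟩⟩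
    · have hub : u ∈ bags b := CP (ρ u) huS j₀ hj u (hρ u) hj₀u
      exact Finset.mem_biUnion.mpr ⟨u, hub, by
        rw [SimpleGraph.mem_incidenceFinset]
        exact ⟨SimpleGraph.mem_edgeFinset.mp heE, Sym2.mem_mk_left u v⟩⟩
  calc (G.edgeFinset.filter _).card
      ≤ ((bags b).biUnion (fun x => G.incidenceFinset x)).card := Finset.card_le_card hsub
    _ ≤ ∑ x ∈ bags b, (G.incidenceFinset x).card := Finset.card_biUnion_le
    _ ≤ ∑ _x ∈ bags b, d := by
        refine Finset.sum_le_sum fun x _ => ?_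
        rw [SimpleGraph.card_incidenceFinset_eq_degree]
        exact hdeg x
    _ = (bags b).card * d := by rw [Finset.sum_const, smul_eq_mul]
    _ ≤ (h + 1) * d := Nat.mul_le_mul_right d (hbags b)

/-- Main extraction lemma: peel off a chunk of vertices of controlled size with few
boundary edges. -/
lemma extract (hT : IsTreeDecomposition G bags T)
    (hbags : ∀ i, (bags i).card ≤ h + 1) (hdeg : ∀ v, G.degree v ≤ d)
    (hρ : ∀ v, v ∈ bags (ρ v))
    (t : ℕ) (ht : h + 1 ≤ t) (h2t : 2 * t ≤ k)
    (R : Finset V) (hR : k < R.card) :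
    ∃ S : Set (Fin m),
      t - h ≤ (R.filter (fun v => ρ v ∈ S)).card ∧
      (R.filter (fun v => ρ v ∈ S)).card ≤ k ∧
      (G.edgeFinset.filter (fun e => ∃ u v : V, e = s(u, v) ∧ u ∈ R ∧ v ∈ R ∧
        ρ u ∈ S ∧ ρ v ∉ S)).card ≤ (h + 1) * d := by
  classical
  set wg : Set (Fin m) → ℕ := fun S => (R.filter (fun v => ρ v ∈ S)).card with hwg
  have hmono : ∀ A B : Set (Fin m), A ⊆ B → wg A ≤ wg B := by
    intro A B hAB
    simp only [hwg]
    apply Finset.card_le_card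
    intro v hv
    simp only [Finset.mem_filter] at hv ⊢
    exact ⟨hv.1, hAB hv.2⟩
  have hsubadd : ∀ A B : Set (Fin m), wg (A ∪ B) ≤ wg A + wg B := by
    intro A B
    simp only [hwg]
    refine le_trans (Finset.card_le_card ?_) (Finset.card_union_le _ _)
    intro v hv
    simp only [Finset.mem_filter, Finset.mem_union, Set.mem_union] at hv ⊢
    tauto
  have hsingle : ∀ b : Fin m, wg {x | x = b} ≤ h + 1 := by
    intro b
    simp only [hwg]
    refine le_trans (Finset.card_le_card ?_) (hbags b)
    intro v hv
    simp only [Finset.mem_filter, Set.mem_setOf_eq] at hv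
    exact hv.2 ▸ hρ v
  -- key: find a bag index b and a list of candidate sets
  have key : ∃ (b : Fin m) (L : List (Set (Fin m))),
      (∀ A ∈ L, ∀ i ∈ A, ∀ j, j ∉ A → ∀ v : V, v ∈ bags i → v ∈ bags j → v ∈ bags b) ∧
      (∀ A ∈ L, wg A ≤ t) ∧ (t - (h + 1)) < wg (uni L ∅) := by
    have hT0 : T.IsAcyclic := hT.1
    have hRne : R.Nonempty := Finset.card_pos.mp (by omega)
    by_cases hQ : (Finset.univ.filter (fun pr : Fin m × Fin m =>
        T.Adj pr.1 pr.2 ∧ t < wg (sideSet T pr.1 pr.2))).Nonempty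
    · -- Case 1 : some side is heavy; take a minimal one
      obtain ⟨⟨a, b⟩, hmem, hmin⟩ := Finset.exists_min_image _
        (fun pr : Fin m × Fin m => (sideSet T pr.1 pr.2).ncard) hQ
      rw [Finset.mem_filter] at hmem
      obtain ⟨-, hab, hwab⟩ := hmem
      set L : List (Set (Fin m)) :=
        ((Finset.univ.filter (fun c => T.Adj b c ∧ c ≠ a)).toList).map
          (fun c => sideSet T b c) with hLdef
      refine ⟨b, L, ?_, ?_, ?_⟩
      · intro A hA i hiA j hjA v hvi hvj
        obtain ⟨c, hc, rfl⟩ := List.mem_map.mp hA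
        have hc' : T.Adj b c ∧ c ≠ a := (Finset.mem_filter.mp (Finset.mem_toList.mp hc)).2
        exact (cross_bags hT hc'.1 hvi hvj hiA hjA).1
      · intro A hA
        obtain ⟨c, hc, rfl⟩ := List.mem_map.mp hA
        have hc' : T.Adj b c ∧ c ≠ a := (Finset.mem_filter.mp (Finset.mem_toList.mp hc)).2
        by_contra hgt
        push_neg at hgt
        have hQmem : (b, c) ∈ Finset.univ.filter (fun pr : Fin m × Fin m =>
            T.Adj pr.1 pr.2 ∧ t < wg (sideSet T pr.1 pr.2)) :=
          Finset.mem_filter.mpr ⟨Finset.mem_univ _, hc'.1, hgt⟩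
        have hle := hmin _ hQmem
        have hssub : sideSet T b c ⊂ sideSet T a b := by
          constructor
          · intro x hx
            exact side_mono hT0 hab hc'.1 hc'.2 hx
          · intro hsub
            have hbmem : b ∈ sideSet T a b := Reachable.refl _
            exact not_reach_del hT0 hc'.1 (hsub hbmem)
        have hlt := Set.ncard_lt_ncard hssub (Set.toFinite _)
        simp only at hle hlt
        omega
      · have hcover : sideSet T a b ⊆ {x | x = b} ∪ uni L ∅ := by
          intro x hx
          by_cases hxb : x = b
          · exact Or.inl hxb
          · refine Or.inr ?_
            obtain ⟨c, hc, hreach⟩ := reach_decomp (hx : (T.deleteEdges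
              {s(a, b)}).Reachable b x) hxb
            have hcT := (SimpleGraph.deleteEdges_adj).mp hc
            have hca : c ≠ a := by
              intro h'
              subst h'
              simp [Sym2.eq_swap] at hcT
            have hle2 : (T.deleteEdges {s(a, b)}).deleteEdges {s(b, c)} ≤
                T.deleteEdges {s(b, c)} := by
              intro u v huv
              rw [SimpleGraph.deleteEdges_adj] at huv ⊢
              rw [SimpleGraph.deleteEdges_adj] at huv
              exact ⟨huv.1.1, huv.2⟩
            have hx2 : x ∈ sideSet T b c := hreach.mono hle2
            exact mem_uni_nilacc.mpr ⟨sideSet T b c, List.mem_map.mpr ⟨c,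
              Finset.mem_toList.mpr (Finset.mem_filter.mpr
                ⟨Finset.mem_univ _, hcT.1, hca⟩), rfl⟩, hx2⟩
        have h1 := hmono _ _ hcover
        have h2 := hsubadd {x | x = b} (uni L ∅)
        have h3 := hsingle b
        have hwab' : t < wg (sideSet T a b) := hwab
        omega
    · -- Case 2 : all sides light
      have hQ' : ∀ a b : Fin m, T.Adj a b → wg (sideSet T a b) ≤ t := by
        intro a b hab
        by_contra hgt
        push_neg at hgt
        exact hQ ⟨(a, b), Finset.mem_filter.mpr ⟨Finset.mem_univ _, hab, hgt⟩⟩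
      by_cases hr : ∃ r : Fin m, t < wg {x | T.Reachable r x}
      · -- Case 2a : a heavy component
        obtain ⟨r, hrw⟩ := hr
        set L : List (Set (Fin m)) :=
          ((Finset.univ.filter (fun c => T.Adj r c)).toList).map
            (fun c => sideSet T r c) with hLdef
        refine ⟨r, L, ?_, ?_, ?_⟩
        · intro A hA i hiA j hjA v hvi hvj
          obtain ⟨c, hc, rfl⟩ := List.mem_map.mp hA
          have hc' : T.Adj r c := (Finset.mem_filter.mp (Finset.mem_toList.mp hc)).2
          exact (cross_bags hT hc' hvi hvj hiA hjA).1
        · intro A hA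
          obtain ⟨c, hc, rfl⟩ := List.mem_map.mp hA
          exact hQ' _ _ (Finset.mem_filter.mp (Finset.mem_toList.mp hc)).2
        · have hcover : {x | T.Reachable r x} ⊆ {x | x = r} ∪ uni L ∅ := by
            intro x hx
            by_cases hxr : x = r
            · exact Or.inl hxr
            · refine Or.inr ?_
              obtain ⟨c, hc, hreach⟩ := reach_decomp (hx : T.Reachable r x) hxr
              exact mem_uni_nilacc.mpr ⟨sideSet T r c, List.mem_map.mpr ⟨c,
                Finset.mem_toList.mpr (Finset.mem_filter.mpr
                  ⟨Finset.mem_univ _, hc⟩), rfl⟩, hreach⟩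
          have h1 := hmono _ _ hcover
          have h2 := hsubadd {x | x = r} (uni L ∅)
          have h3 := hsingle r
          omega
      · -- Case 2b : all components light
        push_neg at hr
        set L : List (Set (Fin m)) :=
          (Finset.univ : Finset (Fin m)).toList.map (fun r => {x | T.Reachable r x})
          with hLdef
        refine ⟨ρ hRne.choose, L, ?_, ?_, ?_⟩
        · intro A hA i hiA j hjA v hvi hvj
          obtain ⟨r, _, rfl⟩ := List.mem_map.mp hA
          exact absurd ((hiA : T.Reachable r i).trans (reach_of_common hT hvi hvj)) hjA
        · intro A hA
          obtain ⟨r, _, rfl⟩ := List.mem_map.mp hA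
          exact hr r
        · have hall : R.filter (fun v => ρ v ∈ uni L ∅) = R :=
            Finset.filter_true_of_mem (fun v _ => mem_uni_nilacc.mpr
              ⟨{x | T.Reachable (ρ v) x}, List.mem_map.mpr ⟨ρ v,
                Finset.mem_toList.mpr (Finset.mem_univ _), rfl⟩, Reachable.refl _⟩)
          have : wg (uni L ∅) = R.card := by
            simp only [hwg]
            rw [hall]
          omega
  obtain ⟨b, L, hLcross, hLbd, hLtot⟩ := key
  obtain ⟨L', hL'1, hL'2, hL'3⟩ := greedy wg hmono hsubadd t (t - (h + 1)) L ∅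
    hLbd (by simp [hwg]) hLtot
  set S : Set (Fin m) := uni L' ∅ with hS
  have CP : ∀ i ∈ S, ∀ j, j ∉ S → ∀ v : V, v ∈ bags i → v ∈ bags j → v ∈ bags b := by
    intro i hi j hj v hvi hvj
    obtain ⟨A, hA, hiA⟩ := mem_uni_nilacc.mp hi
    have hjA : j ∉ A := fun hjA => hj (mem_uni_nilacc.mpr ⟨A, hA, hjA⟩)
    exact hLcross A (hL'1 A hA) i hiA j hjA v hvi hvj
  simp only [hwg] at hL'2 hL'3
  refine ⟨S, by omega, by omega, ?_⟩
  exact cut_bound hT hbags hdeg hρ R S b CP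

/-- Recursive construction of the partition. -/
lemma build (hT : IsTreeDecomposition G bags T)
    (hbags : ∀ i, (bags i).card ≤ h + 1) (hdeg : ∀ v, G.degree v ≤ d)
    (hρ : ∀ v, v ∈ bags (ρ v))
    (t : ℕ) (ht : h + 1 ≤ t) (h2t : 2 * t ≤ k) :
    ∀ (n : ℕ) (R : Finset V), R.card ≤ n →
    ∃ P : Finset (Finset V),
      (∀ B ∈ P, B ⊆ R) ∧
      (∀ B ∈ P, B.card ≤ k) ∧
      (∀ v ∈ R, ∃ B ∈ P, v ∈ B) ∧
      (∀ B ∈ P, ∀ B' ∈ P, B ≠ B' → Disjoint B B') ∧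
      (G.edgeFinset.filter (fun e => ∃ u v : V, e = s(u, v) ∧ u ∈ R ∧ v ∈ R ∧
        ¬ ∃ B ∈ P, u ∈ B ∧ v ∈ B)).card * (t - h) ≤ (h + 1) * d * R.card := by
  classical
  have hsmall : ∀ R : Finset V, R.card ≤ k →
      ∃ P : Finset (Finset V),
      (∀ B ∈ P, B ⊆ R) ∧
      (∀ B ∈ P, B.card ≤ k) ∧
      (∀ v ∈ R, ∃ B ∈ P, v ∈ B) ∧
      (∀ B ∈ P, ∀ B' ∈ P, B ≠ B' → Disjoint B B') ∧
      (G.edgeFinset.filter (fun e => ∃ u v : V, e = s(u, v) ∧ u ∈ R ∧ v ∈ R ∧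
        ¬ ∃ B ∈ P, u ∈ B ∧ v ∈ B)).card * (t - h) ≤ (h + 1) * d * R.card := by
    intro R hRk
    refine ⟨{R}, ?_, ?_, ?_, ?_, ?_⟩
    · intro B hB
      rw [Finset.mem_singleton] at hB
      exact hB ▸ Finset.Subset.refl R
    · intro B hB
      rw [Finset.mem_singleton] at hB
      exact hB ▸ hRk
    · intro v hv
      exact ⟨R, Finset.mem_singleton_self R, hv⟩
    · intro B hB B' hB' hne
      rw [Finset.mem_singleton] at hB hB'
      exact absurd (hB.trans hB'.symm) hne
    · have : (G.edgeFinset.filter (fun e => ∃ u v : V, e = s(u, v) ∧ u ∈ R ∧ v ∈ R ∧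
          ¬ ∃ B ∈ ({R} : Finset (Finset V)), u ∈ B ∧ v ∈ B)) = ∅ := by
        rw [Finset.filter_eq_empty_iff]
        rintro e he ⟨u, v, rfl, hu, hv, hno⟩
        exact hno ⟨R, Finset.mem_singleton_self R, hu, hv⟩
      rw [this]
      simp
  intro n
  induction n with
  | zero =>
    intro R hR
    exact hsmall R (by omega)
  | succ n ih =>
    intro R hR
    by_cases hk' : R.card ≤ k
    · exact hsmall R hk'
    · push_neg at hk'
      obtain ⟨S, hS1, hS2, hS3⟩ := extract hT hbags hdeg hρ t ht h2t R hk'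
      set P0 : Finset V := R.filter (fun v => ρ v ∈ S) with hP0
      have hP0sub : P0 ⊆ R := Finset.filter_subset _ _
      have hP0cardle : P0.card ≤ R.card := Finset.card_le_card hP0sub
      set R' : Finset V := R \ P0 with hR'
      have hR'card : R'.card = R.card - P0.card := Finset.card_sdiff_of_subset hP0sub
      have hR'sub : R' ⊆ R := Finset.sdiff_subset
      have hR'le : R'.card ≤ n := by omega
      obtain ⟨P', hPsub, hPcard, hPcov, hPdis, hPcut⟩ := ih R' hR'le
      refine ⟨insert P0 P', ?_, ?_, ?_, ?_, ?_⟩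
      · intro B hB
        rcases Finset.mem_insert.mp hB with hB | hB
        · exact hB ▸ hP0sub
        · exact (hPsub B hB).trans hR'sub
      · intro B hB
        rcases Finset.mem_insert.mp hB with hB | hB
        · exact hB ▸ hS2
        · exact hPcard B hB
      · intro v hv
        by_cases hvS : ρ v ∈ S
        · exact ⟨P0, Finset.mem_insert_self _ _, Finset.mem_filter.mpr ⟨hv, hvS⟩⟩
        · have hv' : v ∈ R' := Finset.mem_sdiff.mpr ⟨hv, fun hvP =>
            hvS (Finset.mem_filter.mp hvP).2⟩
          obtain ⟨B, hB, hvB⟩ := hPcov v hv'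
          exact ⟨B, Finset.mem_insert_of_mem hB, hvB⟩
      · have hdisP0 : ∀ B ∈ P', Disjoint P0 B := by
          intro B hB
          rw [Finset.disjoint_left]
          intro x hx hxB
          have := hPsub B hB hxB
          rw [hR', Finset.mem_sdiff] at this
          exact this.2 hx
        intro B hB B' hB' hne
        rcases Finset.mem_insert.mp hB with h1 | h1 <;>
          rcases Finset.mem_insert.mp hB' with h2 | h2
        · exact absurd (h1.trans h2.symm) hne
        · exact h1 ▸ hdisP0 B' h2
        · exact h2 ▸ (hdisP0 B h1).symm
        · exact hPdis B h1 B' h2 hne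
      · -- the cut bound
        have hsubcut : (G.edgeFinset.filter (fun e => ∃ u v : V, e = s(u, v) ∧
            u ∈ R ∧ v ∈ R ∧ ¬ ∃ B ∈ insert P0 P', u ∈ B ∧ v ∈ B)) ⊆
            (G.edgeFinset.filter (fun e => ∃ u v : V, e = s(u, v) ∧ u ∈ R ∧ v ∈ R ∧
              ρ u ∈ S ∧ ρ v ∉ S)) ∪
            (G.edgeFinset.filter (fun e => ∃ u v : V, e = s(u, v) ∧ u ∈ R' ∧ v ∈ R' ∧
              ¬ ∃ B ∈ P', u ∈ B ∧ v ∈ B)) := by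
          intro e he
          rw [Finset.mem_filter] at he
          obtain ⟨heE, u, v, rfl, hu, hv, hno⟩ := he
          by_cases hus : ρ u ∈ S <;> by_cases hvs : ρ v ∈ S
          · exact absurd ⟨P0, Finset.mem_insert_self _ _,
              Finset.mem_filter.mpr ⟨hu, hus⟩, Finset.mem_filter.mpr ⟨hv, hvs⟩⟩ hno
          · exact Finset.mem_union_left _ (Finset.mem_filter.mpr
              ⟨heE, u, v, rfl, hu, hv, hus, hvs⟩)
          · exact Finset.mem_union_left _ (Finset.mem_filter.mpr
              ⟨heE, v, u, Sym2.eq_swap, hv, hu, hvs, hus⟩)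
          · refine Finset.mem_union_right _ (Finset.mem_filter.mpr
              ⟨heE, u, v, rfl, ?_, ?_, ?_⟩)
            · exact Finset.mem_sdiff.mpr ⟨hu, fun hP =>
                hus (Finset.mem_filter.mp hP).2⟩
            · exact Finset.mem_sdiff.mpr ⟨hv, fun hP =>
                hvs (Finset.mem_filter.mp hP).2⟩
            · rintro ⟨B, hB, huB, hvB⟩
              exact hno ⟨B, Finset.mem_insert_of_mem hB, huB, hvB⟩
        have hcardle := (Finset.card_le_card hsubcut).trans (Finset.card_union_le _ _)
        have h4 : (t - h) + R'.card ≤ R.card := by omega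
        calc (G.edgeFinset.filter (fun e => ∃ u v : V, e = s(u, v) ∧
            u ∈ R ∧ v ∈ R ∧ ¬ ∃ B ∈ insert P0 P', u ∈ B ∧ v ∈ B)).card * (t - h)
            ≤ ((G.edgeFinset.filter (fun e => ∃ u v : V, e = s(u, v) ∧ u ∈ R ∧ v ∈ R ∧
              ρ u ∈ S ∧ ρ v ∉ S)).card +
              (G.edgeFinset.filter (fun e => ∃ u v : V, e = s(u, v) ∧ u ∈ R' ∧ v ∈ R' ∧
              ¬ ∃ B ∈ P', u ∈ B ∧ v ∈ B)).card) * (t - h) :=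
              Nat.mul_le_mul_right _ hcardle
          _ = (G.edgeFinset.filter (fun e => ∃ u v : V, e = s(u, v) ∧ u ∈ R ∧ v ∈ R ∧
              ρ u ∈ S ∧ ρ v ∉ S)).card * (t - h) +
              (G.edgeFinset.filter (fun e => ∃ u v : V, e = s(u, v) ∧ u ∈ R' ∧ v ∈ R' ∧
              ¬ ∃ B ∈ P', u ∈ B ∧ v ∈ B)).card * (t - h) := add_mul _ _ _
          _ ≤ (h + 1) * d * (t - h) + (h + 1) * d * R'.card :=
              add_le_add (Nat.mul_le_mul_right _ hS3) hPcut
          _ = (h + 1) * d * ((t - h) + R'.card) := (mul_add _ _ _).symm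
          _ ≤ (h + 1) * d * R.card := Nat.mul_le_mul_left _ h4

end Extract

end AuxPart

set_option maxHeartbeats 1000000 in
theorem main_partition {V : Type} [Fintype V] (G : SimpleGraph V)
    (d h : ℕ) (hdeg : ∀ v : V, (G.neighborSet v).ncard ≤ d)
    (htw : HasTreewidthLE G h)
    (ε δ : ℝ) (hε : ε ∈ Set.Ioo (0 : ℝ) (1/2)) (hδ : δ ∈ Set.Ioo (0 : ℝ) (1/2))
    (k : ℕ) (hk : 0 < k)
    (hδk : δ ≤ ε / (100 * (Nat.factorial (2 * h + 3)) *
      (1 + Real.log k + Real.log (Nat.factorial (2 * h + 3)))))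
    (hkb : (28860 * d ^ 5 * (h + 1) ^ 5 : ℝ) / (δ * ε ^ 2) ≤ k) :
    ∃ f : V → Set V,
      (∀ v : V, v ∈ f v) ∧
      (∀ v : V, ∀ w ∈ f v, f v = f w) ∧
      (∀ v : V, (f v).ncard ≤ k) ∧
      ({e ∈ G.edgeSet | ∃ v w : V, e = s(v, w) ∧ f v ≠ f w}.ncard : ℝ) ≤
        ε * (Fintype.card V : ℝ) := by
  classical
  obtain ⟨hε0, hε1⟩ := hε
  obtain ⟨hδ0, hδ1⟩ := hδ
  rcases Nat.eq_zero_or_pos d with hd0 | hd1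
  · -- degenerate case : no edges at all
    subst hd0
    refine ⟨fun v => {v}, fun v => rfl, ?_, ?_, ?_⟩
    · intro v w hw
      rw [Set.mem_singleton_iff] at hw
      rw [hw]
    · intro v
      simp [Set.ncard_singleton]
      omega
    · have hempty : {e ∈ G.edgeSet | ∃ v w : V, e = s(v, w) ∧
          ({v} : Set V) ≠ {w}} = ∅ := by
        rw [Set.eq_empty_iff_forall_notMem]
        rintro e ⟨he, v, w, rfl, -⟩
        have hadj : G.Adj v w := he
        have hmem : w ∈ G.neighborSet v := hadj
        have hpos : 0 < (G.neighborSet v).ncard :=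
          (Set.ncard_pos (Set.toFinite _)).mpr ⟨w, hmem⟩
        have := hdeg v
        omega
      rw [hempty]
      simp
      positivity
  · -- main case
    obtain ⟨m, bags, T, hT, hbags⟩ := htw
    set ρ : V → Fin m := fun v => (hT.2.1 v).choose with hρdef
    have hρ : ∀ v, v ∈ bags (ρ v) := fun v => (hT.2.1 v).choose_spec
    have hdeg' : ∀ v, G.degree v ≤ d := by
      intro v
      rw [← SimpleGraph.card_neighborFinset_eq_degree, SimpleGraph.neighborFinset_def,
        ← Set.ncard_eq_toFinset_card']
      exact hdeg v
    -- real arithmetic preliminaries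
    have hd1R : (1 : ℝ) ≤ d := by exact_mod_cast hd1
    have hh1R : (1 : ℝ) ≤ (h : ℝ) + 1 := by
      have := Nat.cast_nonneg (α := ℝ) h
      linarith
    have hεle1 : ε ≤ 1 := by linarith
    have hF1 : (1 : ℝ) ≤ (Nat.factorial (2 * h + 3) : ℝ) := by
      exact_mod_cast Nat.one_le_iff_ne_zero.mpr (Nat.factorial_ne_zero _)
    have hlogk : (0 : ℝ) ≤ Real.log k := Real.log_nonneg (by exact_mod_cast hk)
    have hlogF : (0 : ℝ) ≤ Real.log (Nat.factorial (2 * h + 3)) := Real.log_nonneg hF1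
    have hden : (100 : ℝ) ≤ 100 * (Nat.factorial (2 * h + 3)) *
        (1 + Real.log k + Real.log (Nat.factorial (2 * h + 3))) := by
      nlinarith
    have hδ100 : δ ≤ ε / 100 := by
      refine hδk.trans ?_
      exact div_le_div_of_nonneg_left (le_of_lt hε0) (by norm_num) hden
    set X : ℝ := (d : ℝ) ^ 5 * ((h : ℝ) + 1) ^ 5 with hX
    have hX1 : (1 : ℝ) ≤ X := by
      rw [hX]
      nlinarith [one_le_pow₀ (n := 5) hd1R, one_le_pow₀ (n := 5) hh1R]
    have hkR : 2886000 * X / ε ^ 3 ≤ (k : ℝ) := by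
      refine le_trans ?_ hkb
      have hδε : 0 < δ * ε ^ 2 := by positivity
      have hcmp : δ * ε ^ 2 ≤ ε ^ 3 / 100 := by nlinarith
      have h1 : (28860 * d ^ 5 * (h + 1) ^ 5 : ℝ) / (ε ^ 3 / 100) ≤
          (28860 * d ^ 5 * (h + 1) ^ 5 : ℝ) / (δ * ε ^ 2) :=
        div_le_div_of_nonneg_left (by positivity) hδε hcmp
      refine le_trans (le_of_eq ?_) h1
      rw [hX]
      push_cast
      field_simp
      ring
    have hε3pos : (0 : ℝ) < ε ^ 3 := by positivity
    have hkX : 2886000 * X ≤ (k : ℝ) * ε ^ 3 := by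
      rw [div_le_iff₀ hε3pos] at hkR
      exact hkR
    have hk16 : 16 * (h + 1) ≤ k := by
      have hXh : ((h : ℝ) + 1) ≤ X := by
        have h5 : ((h : ℝ) + 1) ≤ ((h : ℝ) + 1) ^ 5 := le_self_pow₀ hh1R (by norm_num)
        have hd5 : (1 : ℝ) ≤ (d : ℝ) ^ 5 := one_le_pow₀ hd1R
        rw [hX]
        nlinarith
      have hε3le1 : ε ^ 3 ≤ 1 := by nlinarith
      have hk0 : (0 : ℝ) ≤ (k : ℝ) := Nat.cast_nonneg k
      have hr : (16 * ((h : ℝ) + 1)) ≤ (k : ℝ) := by nlinarith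
      exact_mod_cast (by push_cast; linarith : ((16 * (h + 1) : ℕ) : ℝ) ≤ (k : ℝ))
    set t : ℕ := k / 2 with htdef
    have ht : h + 1 ≤ t := by omega
    have h2t : 2 * t ≤ k := by omega
    have hth8 : k ≤ 8 * (t - h) := by omega
    obtain ⟨P, hPsub, hPcard, hPcov, hPdis, hPcut⟩ :=
      AuxPart.build hT hbags hdeg' hρ t ht h2t (Finset.univ.card) Finset.univ le_rfl
    have hcov : ∀ v : V, ∃ B ∈ P, v ∈ B := fun v => hPcov v (Finset.mem_univ v)
    set blk : V → Finset V := fun v => (hcov v).choose with hblkdef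
    have hblkP : ∀ v, blk v ∈ P := fun v => (hcov v).choose_spec.1
    have hblkmem : ∀ v, v ∈ blk v := fun v => (hcov v).choose_spec.2
    have huniq : ∀ (v : V) (B : Finset V), B ∈ P → v ∈ B → blk v = B := by
      intro v B hB hvB
      by_contra hne
      exact Finset.disjoint_left.mp (hPdis _ (hblkP v) _ hB hne) (hblkmem v) hvB
    refine ⟨fun v => ↑(blk v), fun v => hblkmem v, ?_, ?_, ?_⟩
    · intro v w hw
      have hwv : w ∈ blk v := hw
      have heq : blk w = blk v := huniq w (blk v) (hblkP v) hwv
      show (↑(blk v) : Set V) = (↑(blk w) : Set V)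
      rw [heq]
    · intro v
      rw [Set.ncard_coe_finset]
      exact hPcard _ (hblkP v)
    · -- the cut bound
      rw [Finset.card_univ] at hPcut
      obtain ⟨Cut, hCutmem, hPcut2⟩ :
          ∃ C : Finset (Sym2 V),
            (∀ e, e ∈ C ↔ e ∈ G.edgeFinset ∧ ∃ u v : V, e = s(u, v) ∧
              ¬ ∃ B ∈ P, u ∈ B ∧ v ∈ B) ∧
            C.card * (t - h) ≤ (h + 1) * d * Fintype.card V :=
        ⟨_, fun e => by simp [Finset.mem_filter], hPcut⟩
      have hsub : {e ∈ G.edgeSet | ∃ v w : V, e = s(v, w) ∧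
          (↑(blk v) : Set V) ≠ ↑(blk w)} ⊆ ↑Cut := by
        rintro e ⟨he, v, w, rfl, hfne⟩
        rw [Finset.mem_coe, hCutmem]
        refine ⟨SimpleGraph.mem_edgeFinset.mpr he, v, w, rfl, ?_⟩
        rintro ⟨B, hB, hvB, hwB⟩
        have h1 : blk v = B := huniq v B hB hvB
        have h2 : blk w = B := huniq w B hB hwB
        exact hfne (by rw [h1, h2])
      have hncard : ({e ∈ G.edgeSet | ∃ v w : V, e = s(v, w) ∧
          (↑(blk v) : Set V) ≠ ↑(blk w)}).ncard ≤ Cut.card := by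
        rw [← Set.ncard_coe_finset (Cut)]
        exact Set.ncard_le_ncard hsub (Set.toFinite _)
      -- real arithmetic conclusion
      have hthR : ((h : ℝ) + 1) * d ≤ ε * ((t - h : ℕ) : ℝ) := by
        have ha : ((k : ℝ)) ≤ 8 * ((t - h : ℕ) : ℝ) := by exact_mod_cast hth8
        have hεa : 2886000 * X ≤ 8 * ((t - h : ℕ) : ℝ) * ε ^ 3 := by
          nlinarith
        have hε2 : ε ^ 3 ≤ ε := by nlinarith
        have hta : (0 : ℝ) ≤ ((t - h : ℕ) : ℝ) := by positivity
        have hXdh : ((h : ℝ) + 1) * d ≤ X := by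
          have hdd : (d : ℝ) ≤ (d : ℝ) ^ 5 := le_self_pow₀ hd1R (by norm_num)
          have hhh : ((h : ℝ) + 1) ≤ ((h : ℝ) + 1) ^ 5 := le_self_pow₀ hh1R (by norm_num)
          have hmm := mul_le_mul hhh hdd (by linarith) (by positivity)
          rw [hX]
          nlinarith [hmm]
        nlinarith [mul_le_mul_of_nonneg_left hε2
          (by positivity : (0:ℝ) ≤ 8 * ((t - h : ℕ) : ℝ)), hXdh, hX1]
      have htpos : (0 : ℝ) < ((t - h : ℕ) : ℝ) := by
        have h1 : 0 < t - h := by omega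
        exact_mod_cast h1
      have hPcutR : (Cut.card : ℝ) * ((t - h : ℕ) : ℝ) ≤
          ((h : ℝ) + 1) * d * (Fintype.card V : ℝ) := by
        exact_mod_cast hPcut2
      have hfinal : (Cut.card : ℝ) ≤ ε * (Fintype.card V : ℝ) := by
        have hstep : ((h : ℝ) + 1) * d * (Fintype.card V : ℝ) ≤
            ε * ((t - h : ℕ) : ℝ) * (Fintype.card V : ℝ) :=
          mul_le_mul_of_nonneg_right hthR (by positivity)
        have hmul : (Cut.card : ℝ) * ((t - h : ℕ) : ℝ) ≤
            (ε * (Fintype.card V : ℝ)) * ((t - h : ℕ) : ℝ) := by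
          calc (Cut.card : ℝ) * ((t - h : ℕ) : ℝ) ≤
              ε * ((t - h : ℕ) : ℝ) * (Fintype.card V : ℝ) := hPcutR.trans hstep
            _ = (ε * (Fintype.card V : ℝ)) * ((t - h : ℕ) : ℝ) := by ring
        exact le_of_mul_le_mul_right hmul htpos
      calc ({e ∈ G.edgeSet | ∃ v w : V, e = s(v, w) ∧
            (↑(blk v) : Set V) ≠ ↑(blk w)}.ncard : ℝ) ≤ (Cut.card : ℝ) := by
            exact_mod_cast hncard
        _ ≤ ε * (Fintype.card V : ℝ) := hfinal
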